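/- Let k be a field and n ≥ 1. For every upper triangular u ∈ GL_n(k), the lower triangular Borel subalgebra satisfies 𝔟_{w₀ u} = ∑_{t ∈ T_n} 𝔟_{w₀ u} ∩ 𝔟_t, where T_n ⊂ S_n is the set consisting of the identity together with all transpositions (i,j), 1 ≤ j < i ≤ n — a set of cardinality (n² − n + 2)/2. -/

import Mathlib

open Matrix

/-- The Borel subalgebra of upper triangular matrices, as a `k`-submodule of `gl_n(k)`. -/
def borel0 (k : Type*) [Field k] (n : ℕ) : Submodule k (Matrix (Fin n) (Fin n) k) where
  carrier := {M | ∀ i j : Fin n, j < i → M i j = 0}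
  add_mem' := by intro a b ha hb i j hij; simp [Matrix.add_apply, ha i j hij, hb i j hij]
  zero_mem' := by intro i j hij; simp
  smul_mem' := by intro c a ha i j hij; simp [Matrix.smul_apply, ha i j hij]

/-- Conjugation `A ↦ g⁻¹ A g` as a `k`-linear endomorphism of `gl_n(k)`. -/
noncomputable def conjMap (k : Type*) [Field k] (n : ℕ) (g : Matrix (Fin n) (Fin n) k) :
    Matrix (Fin n) (Fin n) k →ₗ[k] Matrix (Fin n) (Fin n) k :=
  (LinearMap.mulLeft k g⁻¹).comp (LinearMap.mulRight k g)

/-- `𝔟_g = g⁻¹ 𝔟₀ g`, the conjugate Borel subalgebra. -/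
noncomputable def borelConj (k : Type*) [Field k] (n : ℕ) (g : Matrix (Fin n) (Fin n) k) :
    Submodule k (Matrix (Fin n) (Fin n) k) :=
  (borel0 k n).map (conjMap k n g)

section Aux

variable {k : Type*} [Field k] {n : ℕ}

private lemma conjMap_apply' (g A : Matrix (Fin n) (Fin n) k) :
    conjMap k n g A = g⁻¹ * (A * g) := rfl

private lemma mem_borelConj_iff {g h : Matrix (Fin n) (Fin n) k}
    (hgh : g * h = 1) (hhg : h * g = 1) (M : Matrix (Fin n) (Fin n) k) :
    M ∈ borelConj k n g ↔ ∀ a b : Fin n, b < a → (g * M * h) a b = 0 := by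
  have hinv : g⁻¹ = h := Matrix.inv_eq_right_inv hgh
  constructor
  · rintro ⟨A, hA, rfl⟩ a b hb
    have e : g * conjMap k n g A * h = A := by
      rw [conjMap_apply', hinv, ← Matrix.mul_assoc g h, hgh, Matrix.one_mul,
        Matrix.mul_assoc, hgh, Matrix.mul_one]
    rw [e]
    exact hA a b hb
  · intro H
    refine ⟨g * M * h, fun a b hb => H a b hb, ?_⟩
    rw [conjMap_apply', hinv, Matrix.mul_assoc (g * M) h g, hhg, Matrix.mul_one,
      ← Matrix.mul_assoc, hhg, Matrix.one_mul]

private lemma perm_entry (σ : Equiv.Perm (Fin n)) (M : Matrix (Fin n) (Fin n) k) (a b : Fin n) :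
    (σ.permMatrix k * M * σ.permMatrix k) a b = M (σ a) (σ.symm b) := by
  rw [Equiv.Perm.permMatrix, PEquiv.toMatrix_toPEquiv_mul, PEquiv.mul_toMatrix_toPEquiv]
  rfl

private lemma perm_mul_perm (σ τ : Equiv.Perm (Fin n)) :
    (σ.permMatrix k) * (τ.permMatrix k) = (τ * σ).permMatrix k := by
  rw [Equiv.Perm.permMatrix, Equiv.Perm.permMatrix, Equiv.Perm.permMatrix,
    ← PEquiv.toMatrix_trans, ← Equiv.toPEquiv_trans]
  rfl

private lemma perm_one : ((1 : Equiv.Perm (Fin n)).permMatrix k) = 1 := by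
  rw [Equiv.Perm.permMatrix]
  rw [show (1 : Equiv.Perm (Fin n)) = Equiv.refl (Fin n) from rfl, Equiv.toPEquiv_refl,
    PEquiv.toMatrix_refl]

private lemma rev_mul_rev :
    ((Fin.revPerm : Equiv.Perm (Fin n)).permMatrix k) *
      ((Fin.revPerm : Equiv.Perm (Fin n)).permMatrix k) = 1 := by
  rw [perm_mul_perm, show (Fin.revPerm * Fin.revPerm : Equiv.Perm (Fin n)) = 1 from
    Equiv.ext fun x => Fin.rev_rev x, perm_one]

private lemma swap_mul_swap (i j : Fin n) :
    ((Equiv.swap i j).permMatrix k) * ((Equiv.swap i j).permMatrix k) = 1 := by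
  rw [perm_mul_perm, Equiv.swap_mul_self, perm_one]

private lemma trio (X Z : Matrix (Fin n) (Fin n) k) (a b p q : Fin n) :
    (X * Matrix.single a b (1 : k) * Z) p q = X p a * Z b q := by
  rw [Matrix.mul_assoc, Matrix.mul_apply]
  rw [Finset.sum_eq_single a]
  · rw [Matrix.single_mul_apply_same, one_mul]
  · intro c _ hc
    simp [hc]
  · simp

end Aux

section Main

variable {k : Type*} [Field k] {n : ℕ}
variable (u : Matrix (Fin n) (Fin n) k)

private lemma udet (huu : IsUnit u) : IsUnit u.det := (Matrix.isUnit_iff_isUnit_det u).mp huu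

private lemma uinv_upper (hu : ∀ i j : Fin n, j < i → u i j = 0) (huu : IsUnit u) :
    ∀ p q : Fin n, q < p → u⁻¹ p q = 0 := by
  have : Invertible u := Matrix.invertibleOfIsUnitDet u (udet u huu)
  have hbt : u.BlockTriangular id := fun i j h => hu i j h
  have := Matrix.blockTriangular_inv_of_blockTriangular hbt
  exact fun p q h => this h

private lemma lower_mem_LHS (hu : ∀ i j : Fin n, j < i → u i j = 0) (huu : IsUnit u)
    (L : Matrix (Fin n) (Fin n) k) (hL : ∀ p q : Fin n, p < q → L p q = 0) :
    u⁻¹ * L * u ∈ borelConj k n ((Fin.revPerm : Equiv.Perm (Fin n)).permMatrix k * u) := by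
  set P := (Fin.revPerm : Equiv.Perm (Fin n)).permMatrix k with hP
  have hui : u * u⁻¹ = 1 := Matrix.mul_nonsing_inv u (udet u huu)
  have hui' : u⁻¹ * u = 1 := Matrix.nonsing_inv_mul u (udet u huu)
  have hgh : (P * u) * (u⁻¹ * P) = 1 := by
    rw [Matrix.mul_assoc P u, ← Matrix.mul_assoc u u⁻¹, hui, Matrix.one_mul, rev_mul_rev]
  have hhg : (u⁻¹ * P) * (P * u) = 1 := by
    rw [Matrix.mul_assoc u⁻¹ P, ← Matrix.mul_assoc P P, rev_mul_rev, Matrix.one_mul, hui']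
  rw [mem_borelConj_iff hgh hhg]
  intro a b hb
  have e : (P * u) * (u⁻¹ * L * u) * (u⁻¹ * P) = P * L * P := by
    simp only [← Matrix.mul_assoc]
    rw [Matrix.mul_assoc P u u⁻¹, hui, Matrix.mul_one,
      Matrix.mul_assoc (P * L) u u⁻¹, hui, Matrix.mul_one]
  rw [e, perm_entry]
  refine hL _ _ ?_
  simp only [Fin.revPerm_symm, Fin.revPerm_apply]
  exact Fin.rev_lt_rev.mpr hb

end Main

section Main2

variable {k : Type*} [Field k] {n : ℕ}

private lemma mem_borel0' {M : Matrix (Fin n) (Fin n) k} (hM : M ∈ borel0 k n) :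
    ∀ i j : Fin n, j < i → M i j = 0 := hM

/-- The right-hand side of the main theorem, as a definition. -/
private noncomputable def RHS (k : Type*) [Field k] (n : ℕ) (u : Matrix (Fin n) (Fin n) k) :
    Submodule k (Matrix (Fin n) (Fin n) k) :=
  ⨆ t ∈ {σ : Equiv.Perm (Fin n) |
          σ = 1 ∨ ∃ i j : Fin n, i ≠ j ∧ σ = Equiv.swap i j},
    (borelConj k n (Equiv.Perm.permMatrix k (Fin.revPerm : Equiv.Perm (Fin n)) * u) ⊓
      borelConj k n (Equiv.Perm.permMatrix k t))

variable (u : Matrix (Fin n) (Fin n) k)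

private lemma N_mem_swap (hu : ∀ i j : Fin n, j < i → u i j = 0) (huu : IsUnit u)
    {i j : Fin n} (hij : j < i) :
    (∑ a ∈ Finset.Icc j i, u a i • (u⁻¹ * Matrix.single a j (1 : k) * u)) ∈
      borelConj k n ((Equiv.swap i j).permMatrix k) := by
  rw [mem_borelConj_iff (swap_mul_swap i j) (swap_mul_swap i j)]
  intro a b hb
  rw [perm_entry, Equiv.symm_swap]
  set t := Equiv.swap i j with ht
  have hN : ∀ p q : Fin n,
      (∑ a ∈ Finset.Icc j i, u a i • (u⁻¹ * Matrix.single a j (1 : k) * u)) p q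
        = (∑ c ∈ Finset.Icc j i, u⁻¹ p c * u c i) * u j q := by
    intro p q
    rw [Matrix.sum_apply, Finset.sum_mul]
    refine Finset.sum_congr rfl fun c _ => ?_
    rw [Matrix.smul_apply, trio, smul_eq_mul]
    ring
  rw [hN]
  have hw : ∀ p : Fin n, j ≤ p →
      (∑ c ∈ Finset.Icc j i, u⁻¹ p c * u c i) = (1 : Matrix (Fin n) (Fin n) k) p i := by
    intro p hp
    have h1 : (∑ c ∈ Finset.Icc j i, u⁻¹ p c * u c i) = ∑ c : Fin n, u⁻¹ p c * u c i := by
      refine Finset.sum_subset (Finset.subset_univ _) fun c _ hc => ?_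
      rcases lt_or_ge c j with h | h
      · rw [uinv_upper u hu huu p c (lt_of_lt_of_le h hp), zero_mul]
      · have hic : i < c := by
          by_contra hle
          exact hc (Finset.mem_Icc.mpr ⟨h, le_of_not_gt hle⟩)
        rw [hu c i hic, mul_zero]
    rw [h1, ← Matrix.mul_apply, Matrix.nonsing_inv_mul u (udet u huu)]
  by_cases hq : t b < j
  · rw [hu j (t b) hq, mul_zero]
  push_neg at hq
  have hji : j ≠ i := ne_of_lt hij
  have key : j ≤ t a ∧ t a ≠ i := by
    by_cases hai : a = i
    · have hta : t a = j := by rw [hai, ht, Equiv.swap_apply_left]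
      rw [hta]
      exact ⟨le_rfl, hji⟩
    · by_cases haj : a = j
      · exfalso
        have hbj' : b < j := haj ▸ hb
        have hbi : b ≠ i := ne_of_lt (lt_trans hbj' hij)
        have htb : t b = b := Equiv.swap_apply_of_ne_of_ne hbi (ne_of_lt hbj')
        rw [htb] at hq
        exact absurd hbj' (not_lt.mpr hq)
      · have hta : t a = a := Equiv.swap_apply_of_ne_of_ne hai haj
        refine ⟨?_, by rw [hta]; exact hai⟩
        rw [hta]
        by_cases hbi : b = i
        · exact le_of_lt (lt_trans hij (hbi ▸ hb))
        by_cases hbj : b = j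
        · exact le_of_lt (hbj ▸ hb)
        · have htb : t b = b := Equiv.swap_apply_of_ne_of_ne hbi hbj
          rw [htb] at hq
          exact le_of_lt (lt_of_le_of_lt hq hb)
  rw [hw (t a) key.1, Matrix.one_apply_ne key.2, zero_mul]

private lemma diag_mem (hu : ∀ i j : Fin n, j < i → u i j = 0) (huu : IsUnit u) (j : Fin n) :
    u⁻¹ * Matrix.single j j (1 : k) * u ∈ RHS k n u := by
  apply Submodule.mem_iSup_of_mem (1 : Equiv.Perm (Fin n))
  apply Submodule.mem_iSup_of_mem (Or.inl rfl)
  refine ⟨lower_mem_LHS u hu huu _ ?_, ?_⟩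
  · intro p q hpq
    refine Matrix.single_apply_of_ne _ _ _ _ _ ?_
    rintro ⟨rfl, rfl⟩
    exact lt_irrefl _ hpq
  · have h11 : (1 : Matrix (Fin n) (Fin n) k) * 1 = 1 := Matrix.one_mul 1
    rw [perm_one]
    refine (mem_borelConj_iff h11 h11 _).mpr fun a b hb => ?_
    rw [Matrix.one_mul, Matrix.mul_one, trio]
    rcases le_or_gt a j with h | h
    · rw [hu j b (lt_of_lt_of_le hb h), mul_zero]
    · rw [uinv_upper u hu huu a j h, zero_mul]

private lemma u_diag_ne (hu : ∀ i j : Fin n, j < i → u i j = 0) (huu : IsUnit u) (i : Fin n) :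
    u i i ≠ 0 := by
  have hbt : u.BlockTriangular id := fun a b h => hu a b h
  have hdet : u.det = ∏ a, u a a := Matrix.det_of_upperTriangular hbt
  have hne : u.det ≠ 0 := (udet u huu).ne_zero
  rw [hdet] at hne
  exact Finset.prod_ne_zero_iff.mp hne i (Finset.mem_univ i)

private lemma keyB (hu : ∀ i j : Fin n, j < i → u i j = 0) (huu : IsUnit u) :
    ∀ d : ℕ, ∀ i j : Fin n, j ≤ i → (i : ℕ) - (j : ℕ) ≤ d →
      u⁻¹ * Matrix.single i j (1 : k) * u ∈ RHS k n u := by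
  intro d
  induction d with
  | zero =>
    intro i j hji hd
    have hij : i = j := by
      apply le_antisymm _ hji
      rw [Fin.le_def] at hji ⊢
      omega
    cases hij
    exact diag_mem u hu huu _
  | succ d ih =>
    intro i j hji hd
    rcases lt_or_eq_of_le hji with hij | hij
    · have hdiagne : u i i ≠ 0 := u_diag_ne u hu huu i
      set N := ∑ a ∈ Finset.Icc j i, u a i • (u⁻¹ * Matrix.single a j (1 : k) * u) with hNdef
      have hN_RHS : N ∈ RHS k n u := by
        apply Submodule.mem_iSup_of_mem (Equiv.swap i j)
        apply Submodule.mem_iSup_of_mem (Or.inr ⟨i, j, (ne_of_lt hij).symm, rfl⟩)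
        refine ⟨?_, N_mem_swap u hu huu hij⟩
        apply Submodule.sum_mem
        intro a ha
        apply Submodule.smul_mem
        apply lower_mem_LHS u hu huu
        intro p q hpq
        refine Matrix.single_apply_of_ne _ _ _ _ _ ?_
        rintro ⟨rfl, rfl⟩
        exact absurd hpq (not_lt.mpr (Finset.mem_Icc.mp ha).1)
      have split : N = u i i • (u⁻¹ * Matrix.single i j (1 : k) * u)
          + ∑ a ∈ Finset.Ico j i, u a i • (u⁻¹ * Matrix.single a j (1 : k) * u) := by
        rw [hNdef, ← Finset.add_sum_erase _ _ (Finset.mem_Icc.mpr ⟨le_of_lt hij, le_refl i⟩),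
          Finset.Icc_erase_right]
      have expr : u⁻¹ * Matrix.single i j (1 : k) * u
          = (u i i)⁻¹ • (N - ∑ a ∈ Finset.Ico j i, u a i • (u⁻¹ * Matrix.single a j (1 : k) * u)) := by
        rw [split, add_sub_cancel_right, smul_smul, inv_mul_cancel₀ hdiagne, one_smul]
      rw [expr]
      apply Submodule.smul_mem
      apply Submodule.sub_mem _ hN_RHS
      apply Submodule.sum_mem
      intro a ha
      have hmem := Finset.mem_Ico.mp ha
      apply Submodule.smul_mem
      apply ih a j hmem.1
      have h1 : (a : ℕ) < (i : ℕ) := hmem.2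
      have h2 : (j : ℕ) ≤ (a : ℕ) := hmem.1
      omega
    · cases hij
      exact diag_mem u hu huu _

private lemma LHS_le_RHS (hu : ∀ i j : Fin n, j < i → u i j = 0) (huu : IsUnit u) :
    borelConj k n (Equiv.Perm.permMatrix k (Fin.revPerm : Equiv.Perm (Fin n)) * u)
      ≤ RHS k n u := by
  intro M hM
  obtain ⟨A, hA, rfl⟩ := hM
  set P := (Fin.revPerm : Equiv.Perm (Fin n)).permMatrix k with hP
  have hui : u * u⁻¹ = 1 := Matrix.mul_nonsing_inv u (udet u huu)
  have hgh : (P * u) * (u⁻¹ * P) = 1 := by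
    rw [Matrix.mul_assoc P u, ← Matrix.mul_assoc u u⁻¹, hui, Matrix.one_mul, rev_mul_rev]
  have hginv : (P * u)⁻¹ = u⁻¹ * P := Matrix.inv_eq_right_inv hgh
  have e : conjMap k n (P * u) A = u⁻¹ * (P * A * P) * u := by
    rw [conjMap_apply', hginv]
    simp only [Matrix.mul_assoc]
  rw [e]
  set L := P * A * P with hL
  have hLlow : ∀ p q : Fin n, p < q → L p q = 0 := by
    intro p q hpq
    rw [hL, perm_entry]
    apply mem_borel0' hA
    simp only [Fin.revPerm_symm, Fin.revPerm_apply]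
    exact Fin.rev_lt_rev.mpr hpq
  have decomp : u⁻¹ * L * u
      = ∑ p : Fin n, ∑ q : Fin n, L p q • (u⁻¹ * Matrix.single p q (1 : k) * u) := by
    conv_lhs => rw [matrix_eq_sum_single L]
    simp only [Matrix.mul_sum, Matrix.sum_mul]
    refine Finset.sum_congr rfl fun p _ => Finset.sum_congr rfl fun q _ => ?_
    rw [show Matrix.single p q (L p q) = L p q • Matrix.single p q (1 : k) by
      rw [smul_single, smul_eq_mul, mul_one], Matrix.mul_smul, Matrix.smul_mul]
  rw [decomp]
  apply Submodule.sum_mem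
  intro p _
  apply Submodule.sum_mem
  intro q _
  rcases le_or_gt q p with h | h
  · refine Submodule.smul_mem _ _ (keyB u hu huu n p q h ?_)
    omega
  · rw [hLlow p q h, zero_smul]
    exact Submodule.zero_mem _

end Main2

theorem envelope_over_transpositions (k : Type*) [Field k] (n : ℕ) (hn : 0 < n)
    (u : Matrix (Fin n) (Fin n) k) (hu : ∀ i j : Fin n, j < i → u i j = 0) (huu : IsUnit u) :
    borelConj k n (Equiv.Perm.permMatrix k (Fin.revPerm : Equiv.Perm (Fin n)) * u) =
      ⨆ t ∈ {σ : Equiv.Perm (Fin n) |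
              σ = 1 ∨ ∃ i j : Fin n, i ≠ j ∧ σ = Equiv.swap i j},
        (borelConj k n (Equiv.Perm.permMatrix k (Fin.revPerm : Equiv.Perm (Fin n)) * u) ⊓
          borelConj k n (Equiv.Perm.permMatrix k t)) := by
  refine le_antisymm (LHS_le_RHS u hu huu) ?_
  exact iSup_le fun t => iSup_le fun ht => inf_le_left
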